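/- Let L be a finite-dimensional simple Lie algebra over ℂ, let F ∈ L be principal nilpotent, and let σ : L → L be an involutive Lie algebra automorphism such that σ(F) = −F and σ(z) = −z for every z ∈ L with ⁅F, z⁆ = 0. Assume there exists at least one sl₂-triple (h₀, e₀, F) in L with third element F. Then there is exactly one 3-dimensional ℂ-subspace P of L such that σ(P) = P and P is the linear span of the elements of some sl₂-triple (h, e, F) with third element F (in particular, there is a unique σ-invariant principal sl₂-subalgebra of L containing F). -/

import Mathlib

/-- An element `F` of a finite-dimensional complex Lie algebra is *principal nilpotent*
if `ad F` is a nilpotent endomorphism and the centralizer `ker (ad F)` has dimension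
equal to the rank of the Lie algebra (the common dimension of the Cartan subalgebras). -/
def IsPrincipalNilpotent (L : Type*) [LieRing L] [LieAlgebra ℂ L]
    [Module.Finite ℂ L] (F : L) : Prop :=
  IsNilpotent (LieAlgebra.ad ℂ L F) ∧
    Module.finrank ℂ (LinearMap.ker (LieAlgebra.ad ℂ L F)) = LieAlgebra.rank ℂ L

/-- `(h, e, f)` is an `sl₂`-triple: `⁅h,e⁆ = 2e`, `⁅h,f⁆ = -2f`, `⁅e,f⁆ = h`. -/
def IsSl2TripleL {L : Type*} [LieRing L] [LieAlgebra ℂ L] (h e f : L) : Prop :=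
  ⁅h, e⁆ = (2 : ℂ) • e ∧ ⁅h, f⁆ = (-2 : ℂ) • f ∧ ⁅e, f⁆ = h

/-- In a finite-dimensional complex Lie algebra, for an `sl₂`-triple `(h, e, f)`, any `w`
centralizing `f` on which `ad h` acts with eigenvalue `2` must vanish. -/
theorem sl2_w_eq_zero {L : Type*} [LieRing L] [LieAlgebra ℂ L] [FiniteDimensional ℂ L]
    {h e f w : L} (ht : IsSl2TripleL h e f) (hw1 : ⁅f, w⁆ = 0)
    (hw2 : ⁅h, w⁆ = (2:ℂ) • w) : w = 0 := by
  obtain ⟨hhe, hhf, hef⟩ := ht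
  by_contra hw0
  set ws : ℕ → L := fun k => (fun x => ⁅e, x⁆)^[k] w with hws
  have hws0 : ws 0 = w := rfl
  have hwsS : ∀ k, ws (k+1) = ⁅e, ws k⁆ := by
    intro k; simp [hws, Function.iterate_succ_apply']
  have hfe : ⁅f, e⁆ = -h := by rw [← lie_skew, hef]
  have Hh : ∀ k, ⁅h, ws k⁆ = ((2:ℂ) + 2*k) • ws k := by
    intro k; induction k with
    | zero => simpa [hws0] using hw2
    | succ k ih =>
      rw [hwsS, leibniz_lie, ih, hhe, lie_smul, smul_lie, ← hwsS, hwsS k]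
      push_cast
      module
  have Hf : ∀ k, ⁅f, ws (k+1)⁆ = (-(((k:ℂ)+1)*((k:ℂ)+2))) • ws k := by
    intro k; induction k with
    | zero =>
      rw [hwsS, leibniz_lie, hfe, hws0, hw1, lie_zero, neg_lie, hw2]
      module
    | succ k ih =>
      rw [hwsS (k+1), leibniz_lie, hfe, ih, lie_smul, ← hwsS, neg_lie, Hh (k+1)]
      push_cast
      module
  have Hnz : ∀ k, ws k ≠ 0 := by
    intro k; induction k with
    | zero => simpa [hws0] using hw0
    | succ k ih =>
      intro hz
      have h1 := Hf k
      rw [hz, lie_zero] at h1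
      have hc : (-(((k:ℂ)+1)*((k:ℂ)+2))) ≠ 0 := by
        have c1 : ((k:ℂ)+1) ≠ 0 := Nat.cast_add_one_ne_zero k
        have c2 : ((k:ℂ)+2) ≠ 0 := by
          have := Nat.cast_add_one_ne_zero (R := ℂ) (k+1)
          push_cast at this
          intro hwc; exact this (by linear_combination hwc)
        simpa using mul_ne_zero c1 c2
      exact ih ((smul_eq_zero.mp h1.symm).resolve_left hc)
  have Hev : ∀ k : ℕ, (LieAlgebra.ad ℂ L h).HasEigenvector ((2:ℂ) + 2*k) (ws k) := by
    intro k
    exact ⟨Module.End.mem_eigenspace_iff.mpr (by simpa [LieAlgebra.ad_apply] using Hh k), Hnz k⟩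
  have hμ : Function.Injective (fun k : ℕ => (2:ℂ) + 2*(k:ℂ)) := by
    intro a b hab
    simp only at hab
    have : (a:ℂ) = b := by linear_combination hab/2
    exact_mod_cast this
  have hli := Module.End.eigenvectors_linearIndependent' (LieAlgebra.ad ℂ L h)
    (fun k : ℕ => (2:ℂ) + 2*(k:ℂ)) hμ ws Hev
  exact Module.Finite.not_linearIndependent_of_infinite ws hli

/-- The three members of an `sl₂`-triple with `f ≠ 0` are linearly independent. -/
theorem sl2_linearIndependent {L : Type*} [LieRing L] [LieAlgebra ℂ L]
    {h e f : L} (ht : IsSl2TripleL h e f) (hf0 : f ≠ 0) :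
    LinearIndependent ℂ ![h, e, f] := by
  obtain ⟨hhe, hhf, hef⟩ := ht
  have hh0 : h ≠ 0 := by
    intro hz
    apply hf0
    have h1 : (0 : L) = (-2:ℂ) • f := by rw [← hhf, hz, zero_lie]
    exact ((smul_eq_zero.mp h1.symm).resolve_left (by norm_num))
  have he0 : e ≠ 0 := by
    intro hz
    apply hh0
    rw [← hef, hz, zero_lie]
  have hinj : Function.Injective (![0, 2, -2] : Fin 3 → ℂ) := by
    intro i j hij
    fin_cases i <;> fin_cases j <;> first | rfl | (norm_num at hij)
  refine Module.End.eigenvectors_linearIndependent' (LieAlgebra.ad ℂ L h)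
    ![0, 2, -2] hinj ![h, e, f] ?_
  intro i
  fin_cases i
  · exact ⟨Module.End.mem_eigenspace_iff.mpr (by simp [LieAlgebra.ad_apply]), hh0⟩
  · exact ⟨Module.End.mem_eigenspace_iff.mpr (by simpa [LieAlgebra.ad_apply] using hhe), he0⟩
  · exact ⟨Module.End.mem_eigenspace_iff.mpr (by simpa [LieAlgebra.ad_apply] using hhf), hf0⟩

/-- The span of an `sl₂`-triple with `f ≠ 0` is three-dimensional. -/
theorem sl2_span_finrank {L : Type*} [LieRing L] [LieAlgebra ℂ L]
    {h e f : L} (ht : IsSl2TripleL h e f) (hf0 : f ≠ 0) :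
    Module.finrank ℂ (Submodule.span ℂ ({h, e, f} : Set L)) = 3 := by
  have hli := sl2_linearIndependent ht hf0
  have hr : Set.range ![h, e, f] = ({h, e, f} : Set L) := by
    ext x
    simp [Matrix.range_cons, Matrix.range_empty, or_comm, or_assoc, or_left_comm]
  rw [← hr, finrank_span_eq_card hli]
  simp

/-- For an involutive Lie algebra automorphism `σ` negating a principal nilpotent `F`
and its centralizer, there is a unique `σ`-invariant 3-dimensional subspace of `L`
spanned by an `sl₂`-triple with third element `F` (the unique `σ`-invariant principal
`sl₂`-subalgebra containing `F`). -/
theorem unique_sigma_invariant_sl2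
    {L : Type*} [LieRing L] [LieAlgebra ℂ L] [FiniteDimensional ℂ L]
    [LieAlgebra.IsSimple ℂ L] (F : L) (hF : IsPrincipalNilpotent L F)
    (σ : L →ₗ⁅ℂ⁆ L) (hinv : ∀ x, σ (σ x) = x)
    (hσF : σ F = -F) (hσZ : ∀ z : L, ⁅F, z⁆ = 0 → σ z = -z)
    (hex : ∃ h₀ e₀ : L, IsSl2TripleL h₀ e₀ F) :
    ∃! P : Submodule ℂ L,
      Module.finrank ℂ P = 3 ∧ P.map σ.toLinearMap = P ∧
      ∃ h e : L, IsSl2TripleL h e F ∧ P = Submodule.span ℂ {h, e, F} := by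
  obtain ⟨h₀, e₀, ht₀⟩ := hex
  obtain ⟨hhe₀, hhf₀, hef₀⟩ := id ht₀
  -- The centralizer of `F` is abelian (it is negated by the automorphism `σ`).
  have habK : ∀ z w : L, ⁅F, z⁆ = 0 → ⁅F, w⁆ = 0 → ⁅z, w⁆ = 0 := by
    intro z w hz hw
    have h1 : ⁅F, ⁅z, w⁆⁆ = 0 := by rw [leibniz_lie, hz, hw]; simp
    have h2 := hσZ _ h1
    have h3 : σ ⁅z, w⁆ = ⁅σ z, σ w⁆ := σ.map_lie z w
    rw [hσZ _ hz, hσZ _ hw, neg_lie, lie_neg, neg_neg] at h3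
    have h4 : (2:ℂ) • ⁅z, w⁆ = 0 := by linear_combination (norm := module) h2 - h3
    exact (smul_eq_zero.mp h4).resolve_left two_ne_zero
  have hF0 : F ≠ 0 := by
    intro hF0
    refine LieAlgebra.IsSimple.non_abelian (R := ℂ) (L := L) ?_
    exact ⟨fun x y => habK x y (by rw [hF0, zero_lie]) (by rw [hF0, zero_lie])⟩
  -- basic bracket identities
  have hFh₀ : ⁅F, h₀⁆ = (2:ℂ) • F := by
    rw [← lie_skew, hhf₀]; module
  have hFe₀ : ⁅F, e₀⁆ = -h₀ := by rw [← lie_skew, hef₀]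
  have hσh₀ : ⁅F, σ h₀⁆ = (2:ℂ) • F := by
    have h3 := σ.map_lie F h₀
    rw [hFh₀, map_smul σ, hσF, neg_lie] at h3
    linear_combination (norm := module) h3
  have hσe₀F : ⁅F, σ e₀⁆ = σ h₀ := by
    have h3 := σ.map_lie F e₀
    rw [hFe₀, map_neg σ, hσF, neg_lie] at h3
    linear_combination (norm := module) h3
  -- the averaged candidate
  set h : L := (2⁻¹:ℂ) • (h₀ + σ h₀) with hh_def
  set e₁ : L := (2⁻¹:ℂ) • (e₀ - σ e₀) with he₁_def
  have hσh : σ h = h := by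
    rw [hh_def, map_smul σ, map_add σ, hinv, add_comm]
  have hFh : ⁅F, h⁆ = (2:ℂ) • F := by
    rw [hh_def, lie_smul, lie_add, hFh₀, hσh₀]; module
  have hhF : ⁅h, F⁆ = (-2:ℂ) • F := by rw [← lie_skew, hFh]; module
  have hFe₁ : ⁅F, e₁⁆ = -h := by
    rw [he₁_def, lie_smul, lie_sub, hFe₀, hσe₀F, hh_def]; module
  have he₁F : ⁅e₁, F⁆ = h := by rw [← lie_skew, hFe₁, neg_neg]
  clear_value h e₁
  set d : L := ⁅h, e₁⁆ - (2:ℂ) • e₁ with hd_def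
  clear_value d
  have hFd : ⁅F, d⁆ = 0 := by
    have hFhe₁ : ⁅F, ⁅h, e₁⁆⁆ = (-2:ℂ) • h := by
      rw [leibniz_lie, hFh, hFe₁, smul_lie, hFe₁, lie_neg, lie_self]
      module
    rw [hd_def, lie_sub, hFhe₁, lie_smul, hFe₁]
    module
  -- solve for the correction term in the centralizer of F
  have hKinv : ∀ x ∈ LinearMap.ker (LieAlgebra.ad ℂ L F),
      (LieAlgebra.ad ℂ L h₀ - (2:ℂ) • (LinearMap.id : L →ₗ[ℂ] L)) x ∈ LinearMap.ker (LieAlgebra.ad ℂ L F) := by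
    intro x hx
    rw [LinearMap.mem_ker, LieAlgebra.ad_apply] at hx
    rw [LinearMap.mem_ker]
    simp only [LinearMap.sub_apply, LinearMap.smul_apply, LinearMap.id_apply,
      LieAlgebra.ad_apply]
    rw [lie_sub, lie_smul, hx, leibniz_lie, hx, hFh₀, smul_lie, hx]
    simp
  set g := (LieAlgebra.ad ℂ L h₀ - (2:ℂ) • (LinearMap.id : L →ₗ[ℂ] L)).restrict hKinv with hg_def
  have hginj : Function.Injective g := by
    rw [← LinearMap.ker_eq_bot]
    refine LinearMap.ker_eq_bot'.mpr ?_
    intro m hm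
    have hm' : (LieAlgebra.ad ℂ L h₀ - (2:ℂ) • (LinearMap.id : L →ₗ[ℂ] L)) (m : L) = 0 := by
      have := congrArg Subtype.val hm
      simpa [hg_def, LinearMap.restrict_apply] using this
    simp only [LinearMap.sub_apply, LinearMap.smul_apply, LinearMap.id_apply,
      LieAlgebra.ad_apply] at hm'
    have hw2 : ⁅h₀, (m:L)⁆ = (2:ℂ) • (m:L) := by linear_combination (norm := module) hm'
    have hmK : ⁅F, (m:L)⁆ = 0 := by
      have := m.2
      rwa [LinearMap.mem_ker, LieAlgebra.ad_apply] at this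
    exact Subtype.ext (sl2_w_eq_zero ht₀ hmK hw2)
  have hgsurj : Function.Surjective g := LinearMap.injective_iff_surjective.mp hginj
  obtain ⟨y', hy'⟩ := hgsurj ⟨-d, by
    rw [LinearMap.mem_ker, LieAlgebra.ad_apply, lie_neg, hFd, neg_zero]⟩
  set y : L := (y' : L) with hy_def
  have hyK : ⁅F, y⁆ = 0 := by
    have := y'.2
    rwa [LinearMap.mem_ker, LieAlgebra.ad_apply] at this
  have hgy : ⁅h₀, y⁆ - (2:ℂ) • y = -d := by
    have := congrArg Subtype.val hy'
    simpa [hg_def, LinearMap.restrict_apply, LieAlgebra.ad_apply] using this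
  have hzK : ⁅F, h - h₀⁆ = 0 := by rw [lie_sub, hFh, hFh₀, sub_self]
  have hhy : ⁅h, y⁆ = (2:ℂ) • y - d := by
    have h5 : ⁅h - h₀, y⁆ = 0 := habK _ _ hzK hyK
    rw [sub_lie] at h5
    linear_combination (norm := module) h5 + hgy
  set e : L := e₁ + y with he_def
  clear_value e
  have hte : IsSl2TripleL h e F := by
    refine ⟨?_, hhF, ?_⟩
    · rw [he_def, lie_add, hhy]
      have h6 : ⁅h, e₁⁆ = d + (2:ℂ) • e₁ := by rw [hd_def]; module
      rw [h6]; module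
    · have h7 : ⁅y, F⁆ = 0 := by rw [← lie_skew, hyK, neg_zero]
      rw [he_def, add_lie, he₁F, h7, add_zero]
  have hFe : ⁅F, e⁆ = -h := by rw [he_def, lie_add, hFe₁, hyK, add_zero]
  have hσe : σ e = -e := by
    have hFσe : ⁅F, σ e⁆ = h := by
      have h3 := σ.map_lie F e
      rw [hFe, map_neg σ, hσh, hσF, neg_lie] at h3
      linear_combination (norm := module) h3
    have hw1 : ⁅F, σ e + e⁆ = 0 := by rw [lie_add, hFσe, hFe]; simp
    have hhσe : ⁅h, σ e⁆ = (2:ℂ) • σ e := by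
      have h3 := σ.map_lie h e
      rw [hte.1, map_smul σ, hσh] at h3
      exact h3.symm
    have hw2 : ⁅h, σ e + e⁆ = (2:ℂ) • (σ e + e) := by
      rw [lie_add, hhσe, hte.1]; module
    have hw0 := sl2_w_eq_zero hte hw1 hw2
    linear_combination (norm := module) hw0
  -- assemble
  refine ⟨Submodule.span ℂ ({h, e, F} : Set L),
    ⟨sl2_span_finrank hte hF0, ?_, h, e, hte, rfl⟩, ?_⟩
  · -- σ-invariance of the span
    rw [Submodule.map_span]
    have himg : σ.toLinearMap '' ({h, e, F} : Set L) = ({h, -e, -F} : Set L) := by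
      simp [Set.image_insert_eq, hσh, hσe, hσF]
    rw [himg]
    apply le_antisymm
    · rw [Submodule.span_le, Set.insert_subset_iff, Set.insert_subset_iff,
        Set.singleton_subset_iff]
      refine ⟨Submodule.subset_span (by simp),
        Submodule.neg_mem _ (Submodule.subset_span (by simp)),
        Submodule.neg_mem _ (Submodule.subset_span (by simp))⟩
    · rw [Submodule.span_le, Set.insert_subset_iff, Set.insert_subset_iff,
        Set.singleton_subset_iff]
      refine ⟨Submodule.subset_span (by simp), ?_, ?_⟩
      · simpa using Submodule.neg_mem _ (Submodule.subset_span
          (show -e ∈ ({h, -e, -F} : Set L) by simp))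
      · simpa using Submodule.neg_mem _ (Submodule.subset_span
          (show -F ∈ ({h, -e, -F} : Set L) by simp))
  · -- uniqueness
    rintro P' ⟨hdim', hmap', h', e', ht', rfl⟩
    obtain ⟨hhe', hhf', hef'⟩ := id ht'
    have hli' := sl2_linearIndependent ht' hF0
    have hFh' : ⁅F, h'⁆ = (2:ℂ) • F := by rw [← lie_skew, hhf']; module
    have hFe' : ⁅F, e'⁆ = -h' := by rw [← lie_skew, hef']
    have hσh'mem : σ h' ∈ Submodule.span ℂ ({h', e', F} : Set L) := by
      have hmm : σ.toLinearMap h' ∈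
          (Submodule.span ℂ ({h', e', F} : Set L)).map σ.toLinearMap :=
        Submodule.mem_map_of_mem (Submodule.subset_span (by simp))
      rw [hmap'] at hmm
      exact hmm
    rw [Submodule.mem_span_insert] at hσh'mem
    obtain ⟨a, z1, hz1, hrep1⟩ := hσh'mem
    rw [Submodule.mem_span_insert] at hz1
    obtain ⟨b, z2, hz2, rfl⟩ := hz1
    rw [Submodule.mem_span_singleton] at hz2
    obtain ⟨c, rfl⟩ := hz2
    have hFσh' : ⁅F, σ h'⁆ = (2:ℂ) • F := by
      have h3 := σ.map_lie F h'
      rw [hFh', map_smul σ, hσF, neg_lie] at h3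
      linear_combination (norm := module) h3
    have heq : (-b) • h' + (2*a - 2) • F = (0 : L) := by
      have h7 : ⁅F, a • h' + (b • e' + c • F)⁆ = (2:ℂ) • F := by rw [← hrep1]; exact hFσh'
      rw [lie_add, lie_add, lie_smul, lie_smul, lie_smul, hFh', hFe', lie_self] at h7
      linear_combination (norm := module) h7
    have hcoef := Fintype.linearIndependent_iff.mp hli' ![-b, 0, 2*a - 2] (by
      rw [Fin.sum_univ_three]
      simpa using heq)
    have hb : b = 0 := by
      have := hcoef 0
      simpa using this
    have ha : a = 1 := by
      have h8 := hcoef 2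
      simp at h8
      linear_combination h8/2
    have hσh' : σ h' = h' + c • F := by
      rw [hrep1, ha, hb]; module
    have hz'K : ⁅F, h' - h⁆ = 0 := by rw [lie_sub, hFh', hFh, sub_self]
    have h8 := hσZ _ hz'K
    rw [map_sub σ, hσh', hσh] at h8
    have hh' : h' = h + (-(c/2)) • F := by
      linear_combination (norm := module) (2⁻¹:ℂ) • h8
    set t : ℂ := -(c/2) with ht_def
    clear_value t
    set e'' : L := e + (-(t/2)) • h + (-(t^2/4)) • F with he''_def
    clear_value e''
    have hte'' : IsSl2TripleL h' e'' F := by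
      refine ⟨?_, hhf', ?_⟩
      · rw [hh', he''_def]
        simp only [add_lie, lie_add, smul_lie, lie_smul, lie_self]
        rw [hte.1, hhF, hFe, hFh]
        module
      · rw [he''_def, add_lie, add_lie, hte.2.2, smul_lie, hhF, smul_lie, lie_self, hh']
        module
    have hFe'' : ⁅F, e''⁆ = -h' := by rw [← lie_skew, hte''.2.2]
    have hw1' : ⁅F, e' - e''⁆ = 0 := by
      rw [lie_sub, hFe', hFe'']; simp
    have hw2' : ⁅h', e' - e''⁆ = (2:ℂ) • (e' - e'') := by
      rw [lie_sub, hhe', hte''.1]; module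
    have he'e'' : e' = e'' := by
      have h9 := sl2_w_eq_zero ht' hw1' hw2'
      linear_combination (norm := module) h9
    have mh : h ∈ Submodule.span ℂ ({h, e, F} : Set L) := Submodule.subset_span (by simp)
    have me : e ∈ Submodule.span ℂ ({h, e, F} : Set L) := Submodule.subset_span (by simp)
    have mF : F ∈ Submodule.span ℂ ({h, e, F} : Set L) := Submodule.subset_span (by simp)
    have mh' : h' ∈ Submodule.span ℂ ({h', e', F} : Set L) := Submodule.subset_span (by simp)
    have me' : e' ∈ Submodule.span ℂ ({h', e', F} : Set L) := Submodule.subset_span (by simp)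
    have mF' : F ∈ Submodule.span ℂ ({h', e', F} : Set L) := Submodule.subset_span (by simp)
    have mh2 : h ∈ Submodule.span ℂ ({h', e', F} : Set L) := by
      have : h = h' + (-t) • F := by rw [hh']; module
      rw [this]
      exact Submodule.add_mem _ mh' (Submodule.smul_mem _ _ mF')
    apply le_antisymm
    · rw [Submodule.span_le, Set.insert_subset_iff, Set.insert_subset_iff,
        Set.singleton_subset_iff]
      refine ⟨?_, ?_, mF⟩
      · rw [hh']
        exact Submodule.add_mem _ mh (Submodule.smul_mem _ _ mF)
      · rw [he'e'', he''_def]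
        exact Submodule.add_mem _ (Submodule.add_mem _ me (Submodule.smul_mem _ _ mh))
          (Submodule.smul_mem _ _ mF)
    · rw [Submodule.span_le, Set.insert_subset_iff, Set.insert_subset_iff,
        Set.singleton_subset_iff]
      refine ⟨mh2, ?_, mF'⟩
      have h10 : e = e' + (t/2) • h + (t^2/4) • F := by rw [he'e'', he''_def]; module
      rw [h10]
      exact Submodule.add_mem _ (Submodule.add_mem _ me' (Submodule.smul_mem _ _ mh2))
        (Submodule.smul_mem _ _ mF')
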